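/- Let d > 0 and N ≥ d be integers and let c, m be positive integers with 0 ≤ c < m. Then both ⌊n/d⌋ = ⌊c·n/m⌋ and n mod d = ⌊((c·n mod m)·d)/m⌋ hold for all integers n with 0 ≤ n ≤ N if and only if 1/d ≤ c/m < (1 + 1/N)·(1/d). -/

import Mathlib

theorem stmt_4 (d N c m : ℕ) (hd : 0 < d) (hN : d ≤ N) (hc : 0 < c) (hm : 0 < m)
    (hcm : c < m) :
    (∀ n : ℕ, n ≤ N →
        n / d = (c * n) / m ∧ n % d = ((c * n % m) * d) / m) ↔
      ((1 : ℚ) / d ≤ (c : ℚ) / m ∧ (c : ℚ) / m < (1 + 1 / N) * (1 / d)) := by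
  have hN0 : 0 < N := lt_of_lt_of_le hd hN
  have hdQ : (0:ℚ) < d := by exact_mod_cast hd
  have hmQ : (0:ℚ) < m := by exact_mod_cast hm
  have hNQ : (0:ℚ) < N := by exact_mod_cast hN0
  have hA : ((1:ℚ)/d ≤ (c:ℚ)/m) ↔ m ≤ c*d := by
    rw [div_le_div_iff₀ hdQ hmQ, one_mul]
    exact_mod_cast Iff.rfl
  have hB : ((c:ℚ)/m < (1 + 1/N) * (1/d)) ↔ c*d*N < m*(N+1) := by
    have h1 : (1 + 1/(N:ℚ)) * (1/d) = ((N:ℚ)+1)/(N*d) := by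
      field_simp
    rw [h1, div_lt_div_iff₀ hmQ (by positivity)]
    have h2 : ((c:ℚ)*(N*d) < ((N:ℚ)+1)*m) ↔ (c*(N*d) < (N+1)*m) := by
      exact_mod_cast Iff.rfl
    rw [h2, show c*(N*d) = c*d*N by ring, show (N+1)*m = m*(N+1) by ring]
  rw [hA, hB]
  constructor
  · intro h
    have h1 := (h d hN).1
    rw [Nat.div_self hd] at h1
    have hmcd : m ≤ c*d := by
      have := (Nat.one_le_div_iff hm).mp (le_of_eq h1)
      exact this
    refine ⟨hmcd, ?_⟩
    have h2 := h N le_rfl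
    set t := c*d - m with ht
    have hcd : c*d = m + t := by omega
    set q := N / d with hq
    set r := N % d with hr
    have hqr : q*d + r = N := by rw [mul_comm]; exact Nat.div_add_mod N d
    have hq2 : c*N/m = q := h2.1.symm
    have hmod : c*N % m = c*N - m*q := by
      have h3 := Nat.mod_add_div (c*N) m
      rw [hq2] at h3
      exact Nat.eq_sub_of_add_eq h3
    have e : c*N*d = m*q*d + (m*r + t*N) := by
      calc c*N*d = (c*d)*N := by ring
        _ = (m+t)*N := by rw [hcd]
        _ = m*(q*d + r) + t*N := by rw [hqr]; ring
        _ = m*q*d + (m*r + t*N) := by ring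
    have key : (c*N % m) * d = m*r + t*N := by
      rw [hmod, Nat.sub_mul, e]
      exact Nat.add_sub_cancel_left _ _
    have h22 : r = (m*r + t*N)/m := by rw [← key]; exact h2.2
    have htN : t*N < m := by
      by_contra hcon
      push_neg at hcon
      have hstep : r + 1 ≤ (m*r + t*N)/m := by
        rw [Nat.le_div_iff_mul_le hm]
        calc (r+1)*m = m*r + m := by ring
          _ ≤ m*r + t*N := Nat.add_le_add_left hcon _
      rw [← h22] at hstep
      omega
    have hmn : m*N ≤ c*d*N := Nat.mul_le_mul_right N hmcd
    have h' : c*d*N - m*N < m := by rw [← Nat.sub_mul]; exact htN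
    have h'' : c*d*N < m*N + m := by rw [Nat.add_comm]; exact (Nat.sub_lt_iff_lt_add hmn).mp h'
    calc c*d*N < m*N + m := h''
      _ = m*(N+1) := by ring
  · rintro ⟨hmcd, hub⟩ n hn
    set t := c*d - m with ht
    have hcd : c*d = m + t := by omega
    have hmn : m*N ≤ c*d*N := Nat.mul_le_mul_right N hmcd
    have htN : t*N < m := by
      rw [ht, Nat.sub_mul, Nat.sub_lt_iff_lt_add hmn]
      calc c*d*N < m*(N+1) := hub
        _ = m + m*N := by ring
    have htn : t*n < m := lt_of_le_of_lt (Nat.mul_le_mul_left t hn) htN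
    set q := n / d with hq
    set r := n % d with hr
    have hrd : r < d := Nat.mod_lt _ hd
    have hqr : q*d + r = n := by rw [mul_comm]; exact Nat.div_add_mod n d
    have e : c*n*d = m*q*d + (m*r + t*n) := by
      calc c*n*d = (c*d)*n := by ring
        _ = (m+t)*n := by rw [hcd]
        _ = m*(q*d + r) + t*n := by rw [hqr]; ring
        _ = m*q*d + (m*r + t*n) := by ring
    have hdiv : c*n/m = q := by
      have hle : m*q ≤ c*n := by
        have : m*q*d ≤ c*n*d := by rw [e]; exact Nat.le_add_right _ _
        exact Nat.le_of_mul_le_mul_right this hd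
      have hlt : c*n < m*(q+1) := by
        have : c*n*d < m*(q+1)*d := by
          rw [e]
          have h1 : m*r + t*n < m*(r+1) := by
            have := htn
            calc m*r + t*n < m*r + m := Nat.add_lt_add_left htn _
              _ = m*(r+1) := by ring
          have h2 : m*(r+1) ≤ m*d := Nat.mul_le_mul_left m hrd
          calc m*q*d + (m*r + t*n) < m*q*d + m*d :=
                Nat.add_lt_add_left (lt_of_lt_of_le h1 h2) _
            _ = m*(q+1)*d := by ring
        exact Nat.lt_of_mul_lt_mul_right this
      exact Nat.div_eq_of_lt_le (by rw [mul_comm]; exact hle) (by rw [mul_comm (q+1) m]; exact hlt)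
    have hmod : c*n % m = c*n - m*q := by
      have h3 := Nat.mod_add_div (c*n) m
      rw [hdiv] at h3
      exact Nat.eq_sub_of_add_eq h3
    have key : (c*n % m)*d = m*r + t*n := by
      rw [hmod, Nat.sub_mul, e]
      exact Nat.add_sub_cancel_left _ _
    refine ⟨hdiv.symm, ?_⟩
    rw [key, Nat.mul_add_div hm, Nat.div_eq_of_lt htn]
    rfl
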